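/- Every numerical ring (a commutative unital ring with binomial coefficient operations satisfying axioms I–V) is torsion-free as a ℤ-module. -/

import Mathlib

/-- A numerical ring (Ekedahl): a commutative unital ring with unary binomial coefficient
operations satisfying axioms I–V. -/
structure NumericalRing (R : Type*) [CommRing R] where
  /-- The binomial coefficient operations `a ↦ (a choose n)`. -/
  choose : R → ℕ → R
  /-- Axiom I (Vandermonde): `(a+b choose n) = Σ_{p+q=n} (a choose p)(b choose q)`. -/
  axiom_I : ∀ a b : R, ∀ n : ℕ, choose (a + b) n =
    ∑ pq ∈ Finset.HasAntidiagonal.antidiagonal n, choose a pq.1 * choose b pq.2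
  /-- Axiom II: `(ab choose n) = Σ_{m=0}^{n} (a choose m)
    Σ_{q_1+⋯+q_m=n, q_i ≥ 1} (b choose q_1)⋯(b choose q_m)`. -/
  axiom_II : ∀ a b : R, ∀ n : ℕ, choose (a * b) n =
    ∑ m ∈ Finset.range (n + 1), choose a m *
      ∑ q ∈ (Finset.Nat.antidiagonalTuple m n).filter (fun q => ∀ i, 1 ≤ q i),
        ∏ i, choose b (q i)
  /-- Axiom III: `(a choose m)(a choose n) =
    Σ_{k=0}^{n} (a choose m+k)(m+k choose n)(n choose k)`. -/
  axiom_III : ∀ a : R, ∀ m n : ℕ, choose a m * choose a n =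
    ∑ k ∈ Finset.range (n + 1), choose a (m + k) * ((m + k).choose n : R) * (n.choose k : R)
  /-- Axiom IV: `(1 choose n) = 0` for `n ≥ 2`. -/
  axiom_IV : ∀ n : ℕ, 2 ≤ n → choose 1 n = 0
  /-- Axiom V: `(a choose 0) = 1`. -/
  axiom_V0 : ∀ a : R, choose a 0 = 1
  /-- Axiom V: `(a choose 1) = a`. -/
  axiom_V1 : ∀ a : R, choose a 1 = a

namespace NumericalRing
variable {R : Type*} [CommRing R] {N : NumericalRing R}

lemma choose_one_eq (n : ℕ) :
    N.choose 1 n = if n ≤ 1 then 1 else 0 := by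
  match n with
  | 0 => simpa using N.axiom_V0 1
  | 1 => simpa using N.axiom_V1 1
  | (k+2) => simpa using N.axiom_IV (k+2) (by omega)

lemma choose_zero_eq (n : ℕ) (hn : 1 ≤ n) : N.choose 0 n = 0 := by
  induction n using Nat.strong_induction_on with
  | _ n ih =>
    match n, hn with
    | 1, _ => simpa using N.axiom_V1 0
    | (n+2), _ =>
      have h := N.axiom_I 0 0 (n+2)
      rw [add_zero, Finset.Nat.sum_antidiagonal_eq_sum_range_succ_mk] at h
      rw [Finset.sum_range_succ, Finset.sum_range_succ'] at h
      have hmid : ∀ i ∈ Finset.range (n+1),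
          N.choose 0 (i+1) * N.choose 0 (n+2-(i+1)) = 0 := by
        intro i hi
        rw [ih (i+1) (by simp at hi; omega) (by omega), zero_mul]
      rw [Finset.sum_congr rfl hmid] at h
      simp only [Finset.sum_const_zero, zero_add, Nat.sub_zero, Nat.sub_self,
        N.axiom_V0, one_mul, mul_one] at h
      -- h : choose 0 (n+2) = choose 0 (n+2) + choose 0 (n+2)
      linear_combination -h



lemma choose_nsmul_one (k j : ℕ) :
    N.choose (k • (1 : R)) j = (k.choose j : R) := by
  induction k generalizing j with
  | zero =>
    match j with
    | 0 => simpa using N.axiom_V0 0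
    | (j+1) => simpa using N.choose_zero_eq (j+1) (by omega)
  | succ k ih =>
    have h : N.choose (k • (1:R) + 1) j =
        ∑ pq ∈ Finset.HasAntidiagonal.antidiagonal j, N.choose (k • (1:R)) pq.1 * N.choose 1 pq.2 :=
      N.axiom_I _ 1 j
    rw [succ_nsmul]
    rw [h, Finset.Nat.sum_antidiagonal_eq_sum_range_succ_mk]
    match j with
    | 0 => simp [N.axiom_V0]
    | (j+1) =>
      rw [Finset.sum_range_succ, Finset.sum_range_succ]
      have hmid : ∀ i ∈ Finset.range j,
          N.choose (k • (1:R)) i * N.choose 1 (j+1-i) = 0 := by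
        intro i hi
        simp only [Finset.mem_range] at hi
        rw [N.choose_one_eq, if_neg (by omega), mul_zero]
      rw [Finset.sum_congr rfl hmid]
      simp only [Finset.sum_const_zero, zero_add, Nat.add_sub_cancel_left,
        Nat.succ_sub_one, Nat.sub_self]
      rw [ih, ih, N.choose_one_eq, N.choose_one_eq, if_pos (by omega), if_pos (by omega),
        Nat.choose_succ_succ k j]
      push_cast
      ring

lemma choose_rec (a : R) (n : ℕ) :
    ((n : R) + 1) * N.choose a (n + 1) = (a - (n : R)) * N.choose a n := by
  match n with
  | 0 => simp [N.axiom_V0, N.axiom_V1]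
  | (n+1) =>
    have h := N.axiom_III a 1 (n+1)
    rw [N.axiom_V1] at h
    rw [Finset.sum_range_succ, Finset.sum_range_succ] at h
    have hmid : ∀ k ∈ Finset.range n,
        N.choose a (1+k) * ((1+k).choose (n+1) : R) * ((n+1).choose k : R) = 0 := by
      intro k hk
      simp only [Finset.mem_range] at hk
      rw [Nat.choose_eq_zero_of_lt (by omega)]
      push_cast
      ring
    rw [Finset.sum_congr rfl hmid] at h
    simp only [Finset.sum_const_zero, zero_add] at h
    rw [add_comm 1 n, add_comm 1 (n+1)] at h
    rw [Nat.choose_self, Nat.choose_succ_self_right, Nat.choose_succ_self_right] at h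
    push_cast at h ⊢
    linear_combination -h


lemma choose_factorial_sq_zero (x : R) (hx : x * x = 0) (i : ℕ) :
    ((i+1).factorial : R) * N.choose x (i+1) = (-1)^i * (i.factorial : R) * x := by
  induction i with
  | zero => simp [N.axiom_V1]
  | succ i ih =>
    have hrec := N.choose_rec x (i+1)
    have : ((i+2).factorial : R) * N.choose x (i+2) =
        ((i+1).factorial : R) * (((i+1 : ℕ) : R) + 1) * N.choose x (i+2) := by
      rw [Nat.factorial_succ (i+1)]
      push_cast
      ring
    rw [this, mul_assoc, hrec]
    calc ((i+1).factorial : R) * ((x - ((i+1:ℕ):R)) * N.choose x (i+1))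
        = (x - ((i+1:ℕ):R)) * (((i+1).factorial : R) * N.choose x (i+1)) := by ring
      _ = (x - ((i+1:ℕ):R)) * ((-1)^i * (i.factorial : R) * x) := by rw [ih]
      _ = (-1)^i * (i.factorial : R) * (x*x) - ((i+1:ℕ):R) * (-1)^i * (i.factorial:R) * x := by
          ring
      _ = (-1)^(i+1) * ((i+1).factorial : R) * x := by
          rw [hx, Nat.factorial_succ]
          push_cast
          ring
lemma prime_torsion (N : NumericalRing R) (p : ℕ) (hp : p.Prime) (x : R) (h : p • x = 0) : x = 0 := by
  obtain ⟨k, rfl⟩ : ∃ k, p = k + 2 := ⟨p - 2, by have := hp.two_le; omega⟩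
  have hpx : ((k + 2 : ℕ) : R) * x = 0 := by
    rw [← nsmul_eq_mul]; exact h
  have hpx' : ((k : R) + 2) * x = 0 := by exact_mod_cast hpx
  set c : ℕ → ℕ := fun m => ∑ q ∈ (Finset.Nat.antidiagonalTuple m (k+2)).filter
      (fun q => ∀ i, 1 ≤ q i), ∏ i, (k+2).choose (q i) with hcdef
  -- main identity
  have hmain : x + ∑ i ∈ Finset.range (k+1),
      N.choose x (i+1+1) * (c (i+1+1) : R) = 0 := by
    have hx0 : x * ((k+2) • (1:R)) = 0 := by
      rw [mul_smul_comm, mul_one]; exact h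
    have h2 := N.axiom_II x ((k+2) • (1:R)) (k+2)
    rw [hx0, N.choose_zero_eq _ (by omega)] at h2
    have hinner : ∀ m : ℕ, (∑ q ∈ (Finset.Nat.antidiagonalTuple m (k+2)).filter
        (fun q => ∀ i, 1 ≤ q i), ∏ i, N.choose ((k+2) • (1:R)) (q i)) = (c m : R) := by
      intro m
      rw [hcdef]
      push_cast
      exact Finset.sum_congr rfl fun q _ => Finset.prod_congr rfl fun j _ =>
        N.choose_nsmul_one _ _
    simp only [hinner] at h2
    rw [Finset.sum_range_succ', Finset.sum_range_succ'] at h2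
    have hc0 : c 0 = 0 := by
      rw [hcdef]
      simp [Finset.Nat.antidiagonalTuple_zero_succ]
    have hc1 : c 1 = 1 := by
      rw [hcdef]
      simp [Finset.Nat.antidiagonalTuple_one, Finset.filter_singleton]
    rw [hc0, hc1, N.axiom_V0, N.axiom_V1] at h2
    push_cast at h2
    linear_combination -h2
  -- divisibility of the coefficients by p^2
  have hdvd : ∀ i : ℕ, (k+2) * (k+2) ∣ c (i+2) := by
    intro i
    apply Finset.dvd_sum
    intro q hq
    simp only [Finset.mem_filter, Finset.Nat.mem_antidiagonalTuple] at hq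
    obtain ⟨hsum, hpos⟩ := hq
    have hlt : ∀ j : Fin (i+2), q j < k + 2 := by
      intro j
      by_contra hj
      push_neg at hj
      obtain ⟨j', hj'⟩ : ∃ j' : Fin (i+2), j' ≠ j := by
        refine ⟨if j = 0 then 1 else 0, ?_⟩
        split
        · next h0 => subst h0; simp [Fin.ext_iff]
        · next h0 => exact Ne.symm h0
      have hle : q j + q j' ≤ ∑ t, q t := by
        have h5 : ({j, j'} : Finset (Fin (i+2))).sum q ≤ Finset.univ.sum q :=
          Finset.sum_le_sum_of_subset (Finset.subset_univ _)
        rwa [Finset.sum_pair (Ne.symm hj')] at h5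
      have := hpos j'
      omega
    have hne : (0 : Fin (i+2)) ≠ 1 := by simp [Fin.ext_iff]
    have d0 : (k+2) ∣ (k+2).choose (q 0) :=
      hp.dvd_choose_self (Nat.one_le_iff_ne_zero.mp (hpos 0)) (hlt 0)
    have d1 : (k+2) ∣ (k+2).choose (q 1) :=
      hp.dvd_choose_self (Nat.one_le_iff_ne_zero.mp (hpos 1)) (hlt 1)
    calc (k+2)*(k+2) ∣ (k+2).choose (q 0) * (k+2).choose (q 1) := mul_dvd_mul d0 d1
      _ = ∏ j ∈ ({0, 1} : Finset (Fin (i+2))), (k+2).choose (q j) := by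
          rw [Finset.prod_pair hne]
      _ ∣ ∏ j, (k+2).choose (q j) :=
          Finset.prod_dvd_prod_of_subset _ _ _ (Finset.subset_univ _)
  -- x is square-zero
  have hsq : x * x = 0 := by
    have h2 : x * x + (∑ i ∈ Finset.range (k+1),
        N.choose x (i+1+1) * (c (i+1+1) : R)) * x = 0 := by
      rw [← add_mul, hmain, zero_mul]
    rw [Finset.sum_mul] at h2
    have hz : ∀ i ∈ Finset.range (k+1),
        N.choose x (i+1+1) * (c (i+1+1) : R) * x = 0 := by
      intro i _
      obtain ⟨d, hd⟩ := hdvd i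
      rw [show i+1+1 = i+2 from rfl, hd]
      push_cast
      linear_combination (((k:R)+2) * (d : R) * N.choose x (i+2)) * hpx'
    rw [Finset.sum_congr rfl hz, Finset.sum_const_zero, add_zero] at h2
    exact h2
  -- coefficients vanish for large index
  have hchigh : ∀ m : ℕ, k + 2 < m → c m = 0 := by
    intro m hm
    apply Finset.sum_eq_zero
    intro q hq
    simp only [Finset.mem_filter, Finset.Nat.mem_antidiagonalTuple] at hq
    obtain ⟨hsum, hpos⟩ := hq
    have hmle : m ≤ k + 2 := by
      calc m = ∑ _j : Fin m, 1 := by simp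
        _ ≤ ∑ j, q j := Finset.sum_le_sum (fun j _ => hpos j)
        _ = k + 2 := hsum
    omega
  -- factorial bookkeeping
  have hfac : ∀ i : ℕ, ∃ e : ℕ,
      (k+1).factorial * c (i+2) = (i+2).factorial * e ∧ (k+2) ∣ e := by
    intro i
    by_cases hik : i ≤ k
    · obtain ⟨d, hd⟩ := hdvd i
      obtain ⟨t, ht⟩ := Nat.factorial_dvd_factorial (show i+2 ≤ k+2 by omega)
      refine ⟨(k+2)*t*d, ?_, ⟨t*d, by ring⟩⟩
      have h2 : (k+2).factorial = (k+2) * (k+1).factorial := Nat.factorial_succ (k+1)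
      calc (k+1).factorial * c (i+2) = (k+1).factorial * ((k+2)*(k+2)*d) := by rw [hd]
        _ = ((k+2) * (k+1).factorial) * ((k+2)*d) := by ring
        _ = (i+2).factorial * t * ((k+2)*d) := by rw [← h2, ht]
        _ = (i+2).factorial * ((k+2)*t*d) := by ring
    · refine ⟨0, ?_, dvd_zero _⟩
      rw [hchigh (i+2) (by omega)]
      simp
  choose e he1 he2 using hfac
  set T : ℤ := ∑ i ∈ Finset.range (k+1),
      (-1)^(i+1) * (e i : ℤ) * ((i+1).factorial : ℤ) with hTdef
  -- multiply the main identity by (k+1)!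
  have h1 : ((k+1).factorial : R) * (x + ∑ i ∈ Finset.range (k+1),
      N.choose x (i+1+1) * (c (i+1+1) : R)) = 0 := by rw [hmain, mul_zero]
  rw [mul_add, Finset.mul_sum] at h1
  have h3 : ∀ i ∈ Finset.range (k+1),
      ((k+1).factorial : R) * (N.choose x (i+1+1) * (c (i+1+1) : R)) =
      (-1 : R)^(i+1) * (e i : R) * ((i+1).factorial : R) * x := by
    intro i _
    have hfi := N.choose_factorial_sq_zero x hsq (i+1)
    have hcast : ((k+1).factorial : R) * ((c (i+2)) : R) =
        ((i+2).factorial : R) * ((e i) : R) := by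
      exact_mod_cast congrArg (fun n : ℕ => (n : R)) (he1 i)
    linear_combination N.choose x (i+2) * hcast + ((e i : R)) * hfi
  rw [Finset.sum_congr rfl h3] at h1
  have hTx : ((k+1).factorial : R) * x + (T : R) * x = 0 := by
    have hsum2 : (T : R) * x = ∑ i ∈ Finset.range (k+1),
        (-1 : R)^(i+1) * (e i : R) * ((i+1).factorial : R) * x := by
      rw [hTdef]
      push_cast
      rw [Finset.sum_mul]
    rw [hsum2]
    exact h1
  have hKx' : (((k+1).factorial : R) + (T : R)) * x = 0 := by
    rw [add_mul]; exact hTx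
  have hTd : ((k+2 : ℕ) : ℤ) ∣ T := by
    rw [hTdef]
    apply Finset.dvd_sum
    intro i _
    exact ((Int.natCast_dvd_natCast.mpr (he2 i)).mul_left _).mul_right _
  have hnd : ¬ ((k+2 : ℕ) : ℤ) ∣ (((k+1).factorial : ℤ) + T) := by
    intro hdvd2
    have h6 : (k+2) ∣ (k+1).factorial :=
      Int.natCast_dvd_natCast.mp (by simpa using (hdvd2.sub hTd))
    have := (Nat.Prime.dvd_factorial hp).mp h6
    omega
  have hco : IsCoprime ((k+2 : ℕ) : ℤ) (((k+1).factorial : ℤ) + T) := by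
    rw [Int.isCoprime_iff_gcd_eq_one]
    have hcop : Nat.Coprime (k+2) ((((k+1).factorial : ℤ) + T).natAbs) :=
      (Nat.Prime.coprime_iff_not_dvd hp).mpr
        (fun hd => hnd (Int.natAbs_dvd_natAbs.mp (by simpa only [Int.natAbs_natCast] using hd)))
    exact hcop
  obtain ⟨u, v, huv⟩ := hco
  have h7 : ((u * ((k+2 : ℕ) : ℤ) + v * (((k+1).factorial : ℤ) + T) : ℤ) : R) * x = x := by
    rw [huv]; simp
  have h8 : ((u * ((k+2 : ℕ) : ℤ) + v * (((k+1).factorial : ℤ) + T) : ℤ) : R) * x = 0 := by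
    push_cast
    linear_combination (u : R) * hpx' + (v : R) * hKx'
  exact h7.symm.trans h8
end NumericalRing

/-- Numerical rings are torsion-free. -/
theorem numericalRing_torsionFree {R : Type*} [CommRing R] (N : NumericalRing R)
    (n : ℕ) (r : R) (hn : 0 < n) (h : n • r = 0) : r = 0 := by
  induction n using Nat.strong_induction_on generalizing r with
  | _ n ih =>
    rcases eq_or_ne n 1 with rfl | hne
    · simpa using h
    · have hp := Nat.minFac_prime hne
      obtain ⟨m, hm⟩ := n.minFac_dvd
      have h2 := hp.two_le
      have hm0 : 0 < m := by
        rcases Nat.eq_zero_or_pos m with rfl | h'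
        · omega
        · exact h'
      have hmlt : m < n := by
        rcases Nat.lt_or_ge m n with h' | h'
        · exact h'
        · nlinarith [hm]
      have hs : n.minFac • (m • r) = 0 := by
        rw [smul_smul, ← hm]; exact h
      exact ih m hmlt r hm0 (N.prime_torsion _ hp _ hs)
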